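/- arXiv:2502.02860 — 2 statements merged into one kernel-verified Lean document; each statement's English description precedes it below -/
import Mathlib

section
/- For any two-qubit X-state ρ_AB with Hamiltonian H_AB = ε^A σ₃⊗I + ε^B I⊗σ₃ + γ σ₁⊗σ₁ (ε^A ≥ ε^B ≥ 0, γ ≥ 0), the battery capacities satisfy the monogamy relation C(ρ_A; H_A) + C(ρ_B; H_B) ≤ C(ρ_AB; H_AB), where H_A = ε^A σ₃, H_B = ε^B σ₃. -/
open Matrix Finset
open scoped Kronecker

/-- Sort a finite real vector in descending order. -/
noncomputable def dsort {d : ℕ} (v : Fin d → ℝ) : Fin d → ℝ :=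
  fun i => v (Tuple.sort v i.rev)

/-- Battery capacity functional for descending-ordered vectors:
`cap λ ε = ∑ i, ε i * (λ i - λ (d-1-i))`. -/
noncomputable def cap {d : ℕ} (lam eps : Fin d → ℝ) : ℝ :=
  ∑ i, eps i * (lam i - lam i.rev)

/-- Eigenvalues of a Hermitian matrix, in descending order. -/
noncomputable def eigsDesc {m : Type*} [Fintype m] [DecidableEq m] {A : Matrix m m ℂ}
    (hA : A.IsHermitian) : Fin (Fintype.card m) → ℝ :=
  dsort (hA.eigenvalues ∘ (Fintype.equivFin m).symm)

open scoped Classical in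
/-- Quantum battery capacity `C(ρ; H)` (defaults to `0` on non-Hermitian inputs). -/
noncomputable def Cap {m : Type*} [Fintype m] [DecidableEq m] (ρ H : Matrix m m ℂ) : ℝ :=
  if hρ : ρ.IsHermitian then
    if hH : H.IsHermitian then cap (eigsDesc hρ) (eigsDesc hH) else 0
  else 0

/-- Majorization `x ≺ y` of real vectors. -/
noncomputable def Maj {d : ℕ} (x y : Fin d → ℝ) : Prop :=
  (∀ k : ℕ, ∑ i : Fin d, (if (i : ℕ) < k then dsort x i else 0)
      ≤ ∑ i : Fin d, (if (i : ℕ) < k then dsort y i else 0)) ∧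
  ∑ i, x i = ∑ i, y i

def σ1 : Matrix (Fin 2) (Fin 2) ℂ := !![0, 1; 1, 0]
def σ3 : Matrix (Fin 2) (Fin 2) ℂ := !![1, 0; 0, -1]

open scoped ComplexOrder

/-- The two-qubit Hamiltonian of Eq. (3). -/
noncomputable def HAB (eA eB g : ℝ) : Matrix (Fin 2 × Fin 2) (Fin 2 × Fin 2) ℂ :=
  (eA : ℂ) • (σ3 ⊗ₖ (1 : Matrix (Fin 2) (Fin 2) ℂ)) +
  (eB : ℂ) • ((1 : Matrix (Fin 2) (Fin 2) ℂ) ⊗ₖ σ3) +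
  (g : ℂ) • (σ1 ⊗ₖ σ1)

/-- Partial trace over the second qubit. -/
noncomputable def ptA (ρ : Matrix (Fin 2 × Fin 2) (Fin 2 × Fin 2) ℂ) :
    Matrix (Fin 2) (Fin 2) ℂ :=
  fun a c => ∑ b : Fin 2, ρ (a, b) (c, b)

/-- Partial trace over the first qubit. -/
noncomputable def ptB (ρ : Matrix (Fin 2 × Fin 2) (Fin 2 × Fin 2) ℂ) :
    Matrix (Fin 2) (Fin 2) ℂ :=
  fun b d => ∑ a : Fin 2, ρ (a, b) (a, d)


/-! ### Auxiliary lemmas on `dsort` -/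

lemma mono_unique {d : ℕ} {g h : Fin d → ℝ} (hg : Monotone g) (hh : Monotone h)
    (hp : (List.ofFn g).Perm (List.ofFn h)) : g = h :=
  List.ofFn_injective (List.Perm.eq_of_sortedLE (hg.sortedLE_ofFn) (hh.sortedLE_ofFn) hp)

lemma dsort_eq_comp {d : ℕ} (v : Fin d → ℝ) :
    dsort v = v ∘ (Fin.revPerm.trans (Tuple.sort v)) := rfl

lemma dsort_congr {d : ℕ} {v w : Fin d → ℝ}
    (hp : (List.ofFn v).Perm (List.ofFn w)) : dsort v = dsort w := by
  have h1 : v ∘ Tuple.sort v = w ∘ Tuple.sort w := by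
    apply mono_unique (Tuple.monotone_sort v) (Tuple.monotone_sort w)
    exact ((Equiv.Perm.ofFn_comp_perm _ v).trans hp).trans
      (Equiv.Perm.ofFn_comp_perm _ w).symm
  funext i
  show (v ∘ Tuple.sort v) i.rev = (w ∘ Tuple.sort w) i.rev
  rw [h1]

lemma dsort_antitone {d : ℕ} (v : Fin d → ℝ) : Antitone (dsort v) := by
  intro i j hij
  exact Tuple.monotone_sort v (Fin.rev_le_rev.mpr hij)

lemma dsort_eq_self_of_antitone {d : ℕ} {v : Fin d → ℝ} (hv : Antitone v) :
    dsort v = v := by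
  have h1 : v ∘ Tuple.sort v = v ∘ Fin.revPerm := by
    apply mono_unique (Tuple.monotone_sort v)
    · intro i j hij
      exact hv (by simpa using Fin.rev_le_rev.mpr hij)
    · exact ((Equiv.Perm.ofFn_comp_perm _ v)).trans (Equiv.Perm.ofFn_comp_perm _ v).symm
  funext i
  have := congrFun h1 i.rev
  simpa [dsort] using this

lemma dsort_pair (p q : ℝ) : dsort ![p, q] = ![max p q, min p q] := by
  have hanti : Antitone ![max p q, min p q] := by
    intro i j hij
    fin_cases i <;> fin_cases j <;> simp_all
  rw [show dsort ![p, q] = dsort ![max p q, min p q] from ?_,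
    dsort_eq_self_of_antitone hanti]
  apply dsort_congr
  have e1 : List.ofFn ![p, q] = [p, q] := by simp [List.ofFn_succ]
  have e2 : List.ofFn ![max p q, min p q] = [max p q, min p q] := by simp [List.ofFn_succ]
  rw [e1, e2]
  rcases le_total p q with h | h
  · rw [max_eq_right h, min_eq_left h]
    exact List.Perm.swap q p []
  · rw [max_eq_left h, min_eq_right h]

/-! ### Eigenvalues via determinants -/

lemma det_sub_smul_eq_prod_eigs {m : Type*} [Fintype m] [DecidableEq m]
    {A : Matrix m m ℂ} (hA : A.IsHermitian) (x : ℝ) :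
    det (A - (x : ℂ) • 1) = ∏ i, ((hA.eigenvalues i : ℂ) - x) := by
  set U : Matrix m m ℂ := (hA.eigenvectorUnitary : Matrix m m ℂ) with hUdef
  have hU : U ∈ Matrix.unitaryGroup m ℂ := hA.eigenvectorUnitary.2
  have h1 : U * star U = 1 := (Matrix.mem_unitaryGroup_iff).mp hU
  have h2 : star U * U = 1 := (Matrix.mem_unitaryGroup_iff').mp hU
  have hd : diagonal (fun i => (hA.eigenvalues i : ℂ) - x)
      = diagonal (RCLike.ofReal ∘ hA.eigenvalues) - (x : ℂ) • 1 := by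
    ext i j
    by_cases h : i = j <;>
      simp [diagonal, Matrix.one_apply, Matrix.smul_apply, h]
  have key : A - (x : ℂ) • 1 =
      U * (diagonal (fun i => (hA.eigenvalues i : ℂ) - x)) * star U := by
    rw [hd]
    have expand : U * (diagonal (RCLike.ofReal ∘ hA.eigenvalues) - (x : ℂ) • 1) * star U
        = U * diagonal (RCLike.ofReal ∘ hA.eigenvalues) * star U - (x : ℂ) • (U * star U) := by
      simp [mul_sub, sub_mul, mul_smul_comm, smul_mul_assoc]
    rw [expand, h1]
    exact congrArg (· - (x : ℂ) • 1) hA.spectral_theorem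
  rw [key, det_mul, det_mul, mul_comm, ← mul_assoc, ← det_mul, h2, det_one, one_mul,
    det_diagonal]

lemma perm_of_prod_eq {d : ℕ} {v w : Fin d → ℝ}
    (h : ∀ x : ℝ, ∏ i, (x - v i) = ∏ i, (x - w i)) :
    (List.ofFn v).Perm (List.ofFn w) := by
  have hpoly : ((List.ofFn v : Multiset ℝ).map fun a => Polynomial.X - Polynomial.C a).prod
      = ((List.ofFn w : Multiset ℝ).map fun a => Polynomial.X - Polynomial.C a).prod := by
    apply Polynomial.funext
    intro r
    simp only [Multiset.map_coe, Multiset.prod_coe, List.map_ofFn]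
    rw [List.prod_ofFn, List.prod_ofFn]
    simp only [Polynomial.eval_prod, Polynomial.eval_sub, Polynomial.eval_X, Polynomial.eval_C]
    simpa using h r
  have := congrArg Polynomial.roots hpoly
  rw [Polynomial.roots_multiset_prod_X_sub_C, Polynomial.roots_multiset_prod_X_sub_C] at this
  exact Multiset.coe_eq_coe.mp this

lemma prod_flip {d : ℕ} (v : Fin d → ℝ) (x : ℝ) :
    ∏ i, (x - v i) = (-1)^d * ∏ i, (v i - x) := by
  rw [show ((-1:ℝ))^d = ∏ _i : Fin d, (-1:ℝ) by simp, ← Finset.prod_mul_distrib]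
  exact Finset.prod_congr rfl fun i _ => by ring

lemma eigsDesc_eq_dsort {m : Type*} [Fintype m] [DecidableEq m]
    {A : Matrix m m ℂ} (hA : A.IsHermitian) (w : Fin (Fintype.card m) → ℝ)
    (hw : ∀ x : ℝ, det (A - (x : ℂ) • 1) = ∏ i, ((w i : ℂ) - x)) :
    eigsDesc hA = dsort w := by
  apply dsort_congr
  apply perm_of_prod_eq
  intro x
  have key : (((∏ i, ((hA.eigenvalues ∘ (Fintype.equivFin m).symm) i - x)) : ℝ) : ℂ)
      = ((∏ i, (w i - x) : ℝ) : ℂ) := by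
    push_cast
    calc (∏ i, (((hA.eigenvalues ((Fintype.equivFin m).symm i)) : ℂ) - x))
        = ∏ i, ((hA.eigenvalues i : ℂ) - x) :=
          Equiv.prod_comp (Fintype.equivFin m).symm fun i => ((hA.eigenvalues i : ℂ) - x)
      _ = det (A - (x : ℂ) • 1) := (det_sub_smul_eq_prod_eigs hA x).symm
      _ = ∏ i, ((w i : ℂ) - x) := hw x
  have key2 : (∏ i, ((hA.eigenvalues ∘ (Fintype.equivFin m).symm) i - x))
      = ∏ i, (w i - x) := by exact_mod_cast key
  rw [prod_flip, prod_flip, key2]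

/-! ### Determinants of X-shaped matrices -/

noncomputable def e4aux : (Fin 2 × Fin 2) ≃ Fin 4 where
  toFun := fun p => ![![0,1],![2,3]] p.1 p.2
  invFun := ![(0,0),(0,1),(1,0),(1,1)]
  left_inv := by decide
  right_inv := by decide

lemma detX4' (a b c d y y' z z' : ℂ) :
    det !![a,0,0,z; 0,b,y,0; 0,y',c,0; z',0,0,d] = (a*d - z*z') * (b*c - y*y') := by
  have hc : (Fin.castSucc 2 : Fin 4) = 2 := rfl
  rw [det_succ_row_zero]
  simp [Fin.sum_univ_succ, det_fin_three, hc, show (Fin.succAbove 3 2 : Fin 4) = 2 from rfl]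
  ring

lemma detX4 (M : Matrix (Fin 2 × Fin 2) (Fin 2 × Fin 2) ℂ)
    (h1 : M (0,0) (0,1) = 0) (h2 : M (0,0) (1,0) = 0)
    (h3 : M (0,1) (0,0) = 0) (h4 : M (0,1) (1,1) = 0)
    (h5 : M (1,0) (0,0) = 0) (h6 : M (1,0) (1,1) = 0)
    (h7 : M (1,1) (0,1) = 0) (h8 : M (1,1) (1,0) = 0) :
    det M = (M (0,0) (0,0) * M (1,1) (1,1) - M (0,0) (1,1) * M (1,1) (0,0)) *
      (M (0,1) (0,1) * M (1,0) (1,0) - M (0,1) (1,0) * M (1,0) (0,1)) := by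
  simp only [Prod.mk_zero_zero, Prod.mk_one_one] at h1 h2 h3 h4 h5 h6 h7 h8 ⊢
  have key : reindex e4aux e4aux M = !![M 0 0,0,0,M 0 1;
      0,M (0,1) (0,1),M (0,1) (1,0),0;
      0,M (1,0) (0,1),M (1,0) (1,0),0;
      M 1 0,0,0,M 1 1] := by
    ext i j
    fin_cases i <;> fin_cases j <;>
      simp [e4aux, h1,h2,h3,h4,h5,h6,h7,h8, Prod.mk_zero_zero, Prod.mk_one_one]
  rw [← Matrix.det_reindex_self e4aux M, key, detX4']

lemma block_quad (p q nz x : ℝ) (hnz : 0 ≤ nz) :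
    ((p+q)/2 + Real.sqrt (((p-q)/2)^2 + nz) - x) *
      ((p+q)/2 - Real.sqrt (((p-q)/2)^2 + nz) - x)
      = (p - x)*(q - x) - nz := by
  have h := Real.sq_sqrt (by positivity : (0:ℝ) ≤ ((p-q)/2)^2 + nz)
  nlinarith [h]

lemma block_quad2 (p gg x : ℝ) :
    (Real.sqrt (p^2+gg^2) - x) * (-Real.sqrt (p^2+gg^2) - x)
      = (p-x)*(-p-x) - gg^2 := by
  have h := Real.sq_sqrt (by positivity : (0:ℝ) ≤ p^2+gg^2)
  nlinarith [h]

/-! ### Generic order facts -/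

lemma antitone_top2 {f : Fin 4 → ℝ} (hf : Antitone f) {i j : Fin 4} (hij : i ≠ j) :
    f i + f j ≤ f 0 + f 1 := by
  have key : ∀ i j : Fin 4, i < j → f i + f j ≤ f 0 + f 1 := by
    intro i j hlt
    have h0 : f i ≤ f 0 := hf (Fin.zero_le i)
    have h1 : f j ≤ f 1 := hf (by
      rw [Fin.le_def]
      have := Fin.lt_def.mp hlt
      omega)
    linarith
  rcases lt_or_gt_of_ne hij with h | h
  · exact key i j h
  · linarith [key j i h]

lemma antitone_bot2 {f : Fin 4 → ℝ} (hf : Antitone f) {i j : Fin 4} (hij : i ≠ j) :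
    f 2 + f 3 ≤ f i + f j := by
  have key : ∀ i j : Fin 4, i < j → f 2 + f 3 ≤ f i + f j := by
    intro i j hlt
    have h0 : f 2 ≤ f i := hf (by
      rw [Fin.le_def]
      have h := Fin.lt_def.mp hlt
      have hj := j.isLt
      omega)
    have h1 : f 3 ≤ f j := hf (by
      rw [Fin.le_def]
      have hj := j.isLt
      omega)
    linarith
  rcases lt_or_gt_of_ne hij with h | h
  · exact key i j h
  · linarith [key j i h]

/-! ### The final real-arithmetic estimate -/

lemma pair_bound (eA eB u v : ℝ) (hAB : eB ≤ eA) (hB : 0 ≤ eB) :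
    eA*|u+v| + eB*|u-v| ≤ (eA+eB)*(max |u| |v|) + (eA-eB)*(min |u| |v|) := by
  have hA' : 0 ≤ eA - eB := by linarith
  rcases le_total 0 u with hu|hu <;> rcases le_total 0 v with hv|hv
  · rcases le_total u v with h|h
    · rw [abs_of_nonneg hu, abs_of_nonneg hv, abs_of_nonneg (by linarith : (0:ℝ) ≤ u+v),
        abs_of_nonpos (by linarith : u-v ≤ 0), max_eq_right h, min_eq_left h]
      nlinarith
    · rw [abs_of_nonneg hu, abs_of_nonneg hv, abs_of_nonneg (by linarith : (0:ℝ) ≤ u+v),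
        abs_of_nonneg (by linarith : (0:ℝ) ≤ u-v), max_eq_left h, min_eq_right h]
      nlinarith
  · rcases le_total u (-v) with h|h
    · rw [abs_of_nonneg hu, abs_of_nonpos hv, abs_of_nonpos (by linarith : u+v ≤ 0),
        abs_of_nonneg (by linarith : (0:ℝ) ≤ u-v), max_eq_right h, min_eq_left h]
      nlinarith [mul_nonneg hu hA']
    · rw [abs_of_nonneg hu, abs_of_nonpos hv, abs_of_nonneg (by linarith : (0:ℝ) ≤ u+v),
        abs_of_nonneg (by linarith : (0:ℝ) ≤ u-v), max_eq_left h, min_eq_right h]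
      nlinarith [mul_nonneg (by linarith : (0:ℝ) ≤ -v) hA']
  · rcases le_total (-u) v with h|h
    · rw [abs_of_nonpos hu, abs_of_nonneg hv, abs_of_nonneg (by linarith : (0:ℝ) ≤ u+v),
        abs_of_nonpos (by linarith : u-v ≤ 0), max_eq_right h, min_eq_left h]
      nlinarith [mul_nonneg (by linarith : (0:ℝ) ≤ -u) hA']
    · rw [abs_of_nonpos hu, abs_of_nonneg hv, abs_of_nonpos (by linarith : u+v ≤ 0),
        abs_of_nonpos (by linarith : u-v ≤ 0), max_eq_left h, min_eq_right h]
      nlinarith [mul_nonneg hv hA']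
  · rcases le_total v u with h|h
    · rw [abs_of_nonpos hu, abs_of_nonpos hv, abs_of_nonpos (by linarith : u+v ≤ 0),
        abs_of_nonneg (by linarith : (0:ℝ) ≤ u-v), max_eq_right (by linarith : -u ≤ -v),
        min_eq_left (by linarith : -u ≤ -v)]
      nlinarith
    · rw [abs_of_nonpos hu, abs_of_nonpos hv, abs_of_nonpos (by linarith : u+v ≤ 0),
        abs_of_nonpos (by linarith : u-v ≤ 0), max_eq_left (by linarith : -v ≤ -u),
        min_eq_right (by linarith : -v ≤ -u)]
      nlinarith

lemma final_arith (eA eB u v D E G0 G1 s0 s1 : ℝ)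
    (hAB : eB ≤ eA) (hB : 0 ≤ eB)
    (hDu : |u| ≤ D) (hEv : |v| ≤ E)
    (hG0D : D ≤ G0) (hG0E : E ≤ G0) (hsum : D + E ≤ G0 + G1)
    (hs0 : eA + eB ≤ s0) (hs1 : eA - eB ≤ s1) (hs01 : s1 ≤ s0) (hs1n : 0 ≤ s1) :
    2*(eA*|u+v|) + 2*(eB*|u-v|) ≤ 2*(s0*G0) + 2*(s1*G1) := by
  have hs0n : 0 ≤ s0 := le_trans hs1n hs01
  have h1 := pair_bound eA eB u v hAB hB
  have ht : max |u| |v| ≤ max D E := max_le_max hDu hEv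
  have hm : min |u| |v| ≤ min D E := min_le_min hDu hEv
  have htn : (0:ℝ) ≤ max |u| |v| := le_trans (abs_nonneg u) (le_max_left _ _)
  have hmn : (0:ℝ) ≤ min |u| |v| := le_min (abs_nonneg u) (abs_nonneg v)
  have h2 : (eA+eB)*(max |u| |v|) ≤ s0 * max D E := mul_le_mul hs0 ht htn hs0n
  have h3 : (eA-eB)*(min |u| |v|) ≤ s1 * min D E := mul_le_mul hs1 hm hmn hs1n
  have hTsum : max D E + min D E = D + E := max_add_min D E
  have hTG : max D E ≤ G0 := max_le hG0D hG0E
  have h4 : s0 * max D E + s1 * min D E ≤ s0*G0 + s1*G1 := by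
    nlinarith [mul_nonneg (by linarith : (0:ℝ) ≤ s0 - s1) (by linarith : (0:ℝ) ≤ G0 - max D E),
      mul_nonneg hs1n (by linarith : (0:ℝ) ≤ G0 + G1 - (max D E + min D E))]
  linarith

lemma cap_two (lam eps : Fin 2 → ℝ) :
    cap lam eps = eps 0 * (lam 0 - lam 1) + eps 1 * (lam 1 - lam 0) := by
  simp [cap, Fin.sum_univ_two, show (0:Fin 2).rev = 1 from rfl, show (1:Fin 2).rev = 0 from rfl]

lemma cap_four (lam eps : Fin 4 → ℝ) :
    cap lam eps = eps 0 * (lam 0 - lam 3) + eps 1 * (lam 1 - lam 2)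
      + eps 2 * (lam 2 - lam 1) + eps 3 * (lam 3 - lam 0) := by
  simp only [cap, Fin.sum_univ_four, show (0:Fin 4).rev = 3 from rfl,
    show (1:Fin 4).rev = 2 from rfl, show (2:Fin 4).rev = 1 from rfl,
    show (3:Fin 4).rev = 0 from rfl]

lemma sqrt_aux_le (p q : ℝ) (hp : 0 ≤ p) : p ≤ Real.sqrt (p^2 + q^2) := by
  calc p = Real.sqrt (p^2) := (Real.sqrt_sq hp).symm
    _ ≤ Real.sqrt (p^2 + q^2) := Real.sqrt_le_sqrt (by nlinarith [sq_nonneg q])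

lemma sqrt_aux_mono (eA eB g : ℝ) (hA : 0 ≤ eA) (hB : 0 ≤ eB) :
    Real.sqrt ((eA - eB)^2 + g^2) ≤ Real.sqrt ((eA + eB)^2 + g^2) :=
  Real.sqrt_le_sqrt (by nlinarith [mul_nonneg hA hB])
lemma antitone_pair {p q : ℝ} (h : q ≤ p) : Antitone ![p, q] := by
  intro i j hij
  fin_cases i <;> fin_cases j <;> simp_all <;> linarith
lemma antitone_four {p q r s : ℝ} (h1 : q ≤ p) (h2 : r ≤ q) (h3 : s ≤ r) :
    Antitone ![p, q, r, s] := by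
  intro i j hij
  fin_cases i <;> fin_cases j <;> simp_all <;> linarith
set_option maxHeartbeats 1000000 in
/-- Theorem 1: monogamy of battery capacity for two-qubit X-states. -/
theorem capacity_monogamy_two_qubit_X (ρ : Matrix (Fin 2 × Fin 2) (Fin 2 × Fin 2) ℂ)
    (hρ : ρ.PosSemidef) (htr : ρ.trace = 1)
    (hX : ∀ i j : Fin 2 × Fin 2, ρ i j ≠ 0 → i = j ∨ (i.1 ≠ j.1 ∧ i.2 ≠ j.2))
    (eA eB g : ℝ) (hAB : eA ≥ eB) (hB : eB ≥ 0) (hg : 0 ≤ g) :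
    Cap (ptA ρ) ((eA : ℂ) • σ3) + Cap (ptB ρ) ((eB : ℂ) • σ3) ≤
      Cap ρ (HAB eA eB g) := by
  have hherm : ρ.IsHermitian := hρ.1
  have heA0 : (0:ℝ) ≤ eA := le_trans hB hAB
  -- zero entries of ρ
  have h0 : ∀ i j : Fin 2 × Fin 2, i ≠ j → (i.1 = j.1 ∨ i.2 = j.2) → ρ i j = 0 := by
    intro i j hne hor
    by_contra h
    rcases hX i j h with h' | ⟨ha', hb'⟩
    · exact hne h'
    · rcases hor with h'' | h''
      · exact ha' h''
      · exact hb' h''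
  -- real diagonal entries
  have hdiag : ∀ i, ρ i i = ((ρ i i).re : ℂ) := fun i =>
    (Complex.conj_eq_iff_re.mp (hherm.apply i i)).symm
  set aR := (ρ 0 0).re with haRdef
  set dR := (ρ 1 1).re with hdRdef
  set bR := (ρ (0,1) (0,1)).re with hbRdef
  set cR := (ρ (1,0) (1,0)).re with hcRdef
  have ha : ρ 0 0 = (aR : ℂ) := hdiag 0
  have hdd : ρ 1 1 = (dR : ℂ) := hdiag 1
  have hbb : ρ (0,1) (0,1) = (bR : ℂ) := hdiag _
  have hcc : ρ (1,0) (1,0) = (cR : ℂ) := hdiag _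
  have hzc : ρ 1 0 = star (ρ 0 1) := (hherm.apply 1 0).symm
  have hyc : ρ (1,0) (0,1) = star (ρ (0,1) (1,0)) := (hherm.apply (1,0) (0,1)).symm
  -- abbreviations
  set nz := Complex.normSq (ρ 0 1) with hnzdef
  set ny := Complex.normSq (ρ (0,1) (1,0)) with hnydef
  have hnz0 : 0 ≤ nz := by rw [hnzdef]; exact Complex.normSq_nonneg _
  have hny0 : 0 ≤ ny := by rw [hnydef]; exact Complex.normSq_nonneg _
  set u := aR - dR with hudef
  set v := bR - cR with hvdef
  set sZ := Real.sqrt ((u/2)^2 + nz) with hsZdef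
  set sY := Real.sqrt ((v/2)^2 + ny) with hsYdef
  have hsZ0 : 0 ≤ sZ := by rw [hsZdef]; exact Real.sqrt_nonneg _
  have hsY0 : 0 ≤ sY := by rw [hsYdef]; exact Real.sqrt_nonneg _
  set s0 := Real.sqrt ((eA + eB)^2 + g^2) with hs0def
  set s1 := Real.sqrt ((eA - eB)^2 + g^2) with hs1def
  set wρ : Fin 4 → ℝ := ![(aR+dR)/2 + sZ, (aR+dR)/2 - sZ, (bR+cR)/2 + sY, (bR+cR)/2 - sY]
    with hwρdef
  set wH : Fin 4 → ℝ := ![s0, s1, -s1, -s0] with hwHdef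
  -- Hermitian structure
  have hptA : (ptA ρ).IsHermitian := by
    apply Matrix.IsHermitian.ext
    intro i j
    show star (∑ b, ρ (j, b) (i, b)) = ∑ b, ρ (i, b) (j, b)
    rw [star_sum]
    exact Finset.sum_congr rfl fun b _ => hherm.apply (i, b) (j, b)
  have hptB : (ptB ρ).IsHermitian := by
    apply Matrix.IsHermitian.ext
    intro i j
    show star (∑ a, ρ (a, j) (a, i)) = ∑ a, ρ (a, i) (a, j)
    rw [star_sum]
    exact Finset.sum_congr rfl fun a _ => hherm.apply (a, i) (a, j)
  have hsA : ((eA : ℂ) • σ3).IsHermitian := by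
    apply Matrix.IsHermitian.ext
    intro i j
    fin_cases i <;> fin_cases j <;> simp [σ3]
  have hsB : ((eB : ℂ) • σ3).IsHermitian := by
    apply Matrix.IsHermitian.ext
    intro i j
    fin_cases i <;> fin_cases j <;> simp [σ3]
  have hH4 : (HAB eA eB g).IsHermitian := by
    apply Matrix.IsHermitian.ext
    intro p q
    fin_cases p <;> fin_cases q <;>
      simp [HAB, σ1, σ3, Matrix.kroneckerMap_apply, Matrix.one_apply]
  -- determinant of ρ - x
  have hdetρ : ∀ x : ℝ, det (ρ - (x:ℂ) • 1) = ∏ i, ((wρ i : ℂ) - x) := by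
    intro x
    have hzero : ∀ p q : Fin 2 × Fin 2, p ≠ q → (p.1 = q.1 ∨ p.2 = q.2) →
        (ρ - (x:ℂ) • 1) p q = 0 := by
      intro p q hne hor
      simp [Matrix.sub_apply, Matrix.smul_apply, Matrix.one_apply_ne hne, h0 p q hne hor]
    rw [detX4 _ (hzero _ _ (by decide) (by decide)) (hzero _ _ (by decide) (by decide))
        (hzero _ _ (by decide) (by decide)) (hzero _ _ (by decide) (by decide))
        (hzero _ _ (by decide) (by decide)) (hzero _ _ (by decide) (by decide))
        (hzero _ _ (by decide) (by decide)) (hzero _ _ (by decide) (by decide))]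
    have q1 : ((aR+dR)/2 + sZ - x) * ((aR+dR)/2 - sZ - x) = (aR-x)*(dR-x) - nz := by
      have q := block_quad aR dR nz x hnz0
      rw [← hudef] at q
      rw [hsZdef]
      exact q
    have q2 : ((bR+cR)/2 + sY - x) * ((bR+cR)/2 - sY - x) = (bR-x)*(cR-x) - ny := by
      have q := block_quad bR cR ny x hny0
      rw [← hvdef] at q
      rw [hsYdef]
      exact q
    have hprod : ∏ i, ((wρ i : ℂ) - x) = ((∏ i, (wρ i - x) : ℝ) : ℂ) := by
      push_cast
      rfl
    rw [hprod]
    have hreal : ∏ i, (wρ i - x)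
        = ((aR-x)*(dR-x) - nz) * ((bR-x)*(cR-x) - ny) := by
      rw [Fin.prod_univ_four]
      have e0 : wρ 0 = (aR+dR)/2 + sZ := by rw [hwρdef]; rfl
      have e1 : wρ 1 = (aR+dR)/2 - sZ := by rw [hwρdef]; rfl
      have e2 : wρ 2 = (bR+cR)/2 + sY := by rw [hwρdef]; rfl
      have e3 : wρ 3 = (bR+cR)/2 - sY := by rw [hwρdef]; rfl
      rw [e0, e1, e2, e3]
      linear_combination (((bR+cR)/2 + sY - x) * ((bR+cR)/2 - sY - x)) * q1
        + ((aR-x)*(dR-x) - nz) * q2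
    rw [hreal]
    simp only [Matrix.sub_apply, Matrix.smul_apply, Prod.mk_zero_zero, Prod.mk_one_one,
      Matrix.one_apply_eq, Matrix.one_apply_ne (show ((0:Fin 2×Fin 2)) ≠ 1 by decide),
      Matrix.one_apply_ne (show ((1:Fin 2×Fin 2)) ≠ 0 by decide),
      Matrix.one_apply_ne (show (((0:Fin 2),(1:Fin 2))) ≠ ((1:Fin 2),(0:Fin 2)) by decide),
      Matrix.one_apply_ne (show (((1:Fin 2),(0:Fin 2))) ≠ ((0:Fin 2),(1:Fin 2)) by decide),
      Matrix.one_apply_eq, ha, hdd, hbb, hcc, hzc, hyc, mul_one, mul_zero, sub_zero]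
    simp only [smul_eq_mul, smul_zero, mul_zero, mul_one, sub_zero]
    rw [show ρ 0 1 * star (ρ 0 1) = ((nz:ℝ):ℂ) by
        rw [hnzdef]; exact_mod_cast Complex.mul_conj (ρ 0 1),
      show ρ (0,1) (1,0) * star (ρ (0,1) (1,0)) = ((ny:ℝ):ℂ) by
        rw [hnydef]; exact_mod_cast Complex.mul_conj (ρ (0,1) (1,0))]
    push_cast
    ring
  -- determinant of HAB - x
  have hdetH : ∀ x : ℝ, det (HAB eA eB g - (x:ℂ) • 1) = ∏ i, ((wH i : ℂ) - x) := by
    intro x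
    have hHz : ∀ p q : Fin 2 × Fin 2, p ≠ q → HAB eA eB g p q = 0 →
        (HAB eA eB g - (x:ℂ) • 1) p q = 0 := by
      intro p q hne hv
      simp [Matrix.sub_apply, Matrix.smul_apply, Matrix.one_apply_ne hne, hv]
    rw [detX4 _
      (hHz _ _ (by decide) (by simp [HAB, σ1, σ3, Matrix.kroneckerMap_apply, Matrix.one_apply]))
      (hHz _ _ (by decide) (by simp [HAB, σ1, σ3, Matrix.kroneckerMap_apply, Matrix.one_apply]))
      (hHz _ _ (by decide) (by simp [HAB, σ1, σ3, Matrix.kroneckerMap_apply, Matrix.one_apply]))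
      (hHz _ _ (by decide) (by simp [HAB, σ1, σ3, Matrix.kroneckerMap_apply, Matrix.one_apply]))
      (hHz _ _ (by decide) (by simp [HAB, σ1, σ3, Matrix.kroneckerMap_apply, Matrix.one_apply]))
      (hHz _ _ (by decide) (by simp [HAB, σ1, σ3, Matrix.kroneckerMap_apply, Matrix.one_apply]))
      (hHz _ _ (by decide) (by simp [HAB, σ1, σ3, Matrix.kroneckerMap_apply, Matrix.one_apply]))
      (hHz _ _ (by decide) (by simp [HAB, σ1, σ3, Matrix.kroneckerMap_apply, Matrix.one_apply]))]
    have q1 : (s0 - x) * (-s0 - x) = ((eA+eB)-x)*((-(eA+eB))-x) - g^2 := by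
      rw [hs0def]; exact block_quad2 (eA+eB) g x
    have q2 : (s1 - x) * (-s1 - x) = ((eA-eB)-x)*((-(eA-eB))-x) - g^2 := by
      rw [hs1def]; exact block_quad2 (eA-eB) g x
    have hprod : ∏ i, ((wH i : ℂ) - x) = ((∏ i, (wH i - x) : ℝ) : ℂ) := by
      push_cast
      rfl
    rw [hprod]
    have hreal : ∏ i, (wH i - x)
        = (((eA+eB)-x)*((-(eA+eB))-x) - g^2) * (((eA-eB)-x)*((-(eA-eB))-x) - g^2) := by
      rw [Fin.prod_univ_four]
      have e0 : wH 0 = s0 := by rw [hwHdef]; rfl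
      have e1 : wH 1 = s1 := by rw [hwHdef]; rfl
      have e2 : wH 2 = -s1 := by rw [hwHdef]; rfl
      have e3 : wH 3 = -s0 := by rw [hwHdef]; rfl
      rw [e0, e1, e2, e3]
      linear_combination ((s1 - x) * (-s1 - x)) * q1
        + (((eA+eB)-x)*((-(eA+eB))-x) - g^2) * q2
    rw [hreal]
    simp only [Matrix.sub_apply, Matrix.smul_apply, Prod.mk_zero_zero, Prod.mk_one_one,
      Matrix.one_apply_eq,
      Matrix.one_apply_ne (show ((0:Fin 2×Fin 2)) ≠ 1 by decide),
      Matrix.one_apply_ne (show ((1:Fin 2×Fin 2)) ≠ 0 by decide),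
      Matrix.one_apply_ne (show (((0:Fin 2),(1:Fin 2))) ≠ ((1:Fin 2),(0:Fin 2)) by decide),
      Matrix.one_apply_ne (show (((1:Fin 2),(0:Fin 2))) ≠ ((0:Fin 2),(1:Fin 2)) by decide)]
    simp only [smul_eq_mul, smul_zero, mul_zero, mul_one, sub_zero]
    simp [HAB, σ1, σ3, Matrix.kroneckerMap_apply, Matrix.one_apply]
    push_cast
    ring
  -- determinants of the reduced states
  have hdetA : ∀ x : ℝ, det (ptA ρ - (x:ℂ) • 1)
      = ∏ i : Fin 2, ((![aR+bR, cR+dR] i : ℂ) - x) := by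
    intro x
    have z1 : ρ 0 (1,0) = 0 := h0 _ _ (by decide) (by decide)
    have z2 : ρ (0,1) 1 = 0 := h0 _ _ (by decide) (by decide)
    have z3 : ρ (1,0) 0 = 0 := h0 _ _ (by decide) (by decide)
    have z4 : ρ 1 (0,1) = 0 := h0 _ _ (by decide) (by decide)
    rw [det_fin_two]
    have e00 : (ptA ρ - (x:ℂ) • 1) 0 0 = ((aR:ℂ) + bR) - x := by
      simp [Matrix.sub_apply, Matrix.smul_apply, Matrix.one_apply, ptA, Fin.sum_univ_two, Prod.mk_zero_zero, Prod.mk_one_one,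
        ha, hbb]
    have e11 : (ptA ρ - (x:ℂ) • 1) 1 1 = ((cR:ℂ) + dR) - x := by
      simp [Matrix.sub_apply, Matrix.smul_apply, Matrix.one_apply, ptA, Fin.sum_univ_two, Prod.mk_zero_zero, Prod.mk_one_one,
        hcc, hdd]
      try ring
    have e01 : (ptA ρ - (x:ℂ) • 1) 0 1 = 0 := by
      simp [Matrix.sub_apply, Matrix.smul_apply, Matrix.one_apply, ptA, Fin.sum_univ_two, Prod.mk_zero_zero, Prod.mk_one_one,
        z1, z2]
    have e10 : (ptA ρ - (x:ℂ) • 1) 1 0 = 0 := by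
      simp [Matrix.sub_apply, Matrix.smul_apply, Matrix.one_apply, ptA, Fin.sum_univ_two, Prod.mk_zero_zero, Prod.mk_one_one,
        z3, z4]
    rw [e00, e01, e10, e11, Fin.prod_univ_two]
    push_cast
    try simp
    try ring
  have hdetB : ∀ x : ℝ, det (ptB ρ - (x:ℂ) • 1)
      = ∏ i : Fin 2, ((![aR+cR, bR+dR] i : ℂ) - x) := by
    intro x
    have z1 : ρ 0 (0,1) = 0 := h0 _ _ (by decide) (by decide)
    have z2 : ρ (1,0) 1 = 0 := h0 _ _ (by decide) (by decide)
    have z3 : ρ (0,1) 0 = 0 := h0 _ _ (by decide) (by decide)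
    have z4 : ρ 1 (1,0) = 0 := h0 _ _ (by decide) (by decide)
    rw [det_fin_two]
    have e00 : (ptB ρ - (x:ℂ) • 1) 0 0 = ((aR:ℂ) + cR) - x := by
      simp [Matrix.sub_apply, Matrix.smul_apply, Matrix.one_apply, ptB, Fin.sum_univ_two, Prod.mk_zero_zero, Prod.mk_one_one,
        ha, hcc]
    have e11 : (ptB ρ - (x:ℂ) • 1) 1 1 = ((bR:ℂ) + dR) - x := by
      simp [Matrix.sub_apply, Matrix.smul_apply, Matrix.one_apply, ptB, Fin.sum_univ_two, Prod.mk_zero_zero, Prod.mk_one_one,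
        hbb, hdd]
      try ring
    have e01 : (ptB ρ - (x:ℂ) • 1) 0 1 = 0 := by
      simp [Matrix.sub_apply, Matrix.smul_apply, Matrix.one_apply, ptB, Fin.sum_univ_two, Prod.mk_zero_zero, Prod.mk_one_one,
        z1, z2]
    have e10 : (ptB ρ - (x:ℂ) • 1) 1 0 = 0 := by
      simp [Matrix.sub_apply, Matrix.smul_apply, Matrix.one_apply, ptB, Fin.sum_univ_two, Prod.mk_zero_zero, Prod.mk_one_one,
        z3, z4]
    rw [e00, e01, e10, e11, Fin.prod_univ_two]
    push_cast
    try simp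
    try ring
  have hdetσA : ∀ x : ℝ, det (((eA:ℂ) • σ3) - (x:ℂ) • 1)
      = ∏ i : Fin 2, ((![eA, -eA] i : ℂ) - x) := by
    intro x
    rw [det_fin_two, Fin.prod_univ_two]
    simp [σ3, Matrix.sub_apply, Matrix.smul_apply, Matrix.one_apply]
    try push_cast
    try ring
  have hdetσB : ∀ x : ℝ, det (((eB:ℂ) • σ3) - (x:ℂ) • 1)
      = ∏ i : Fin 2, ((![eB, -eB] i : ℂ) - x) := by
    intro x
    rw [det_fin_two, Fin.prod_univ_two]
    simp [σ3, Matrix.sub_apply, Matrix.smul_apply, Matrix.one_apply]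
    try push_cast
    try ring
  -- s ordering
  have hs1n : 0 ≤ s1 := by rw [hs1def]; exact Real.sqrt_nonneg _
  have hs01 : s1 ≤ s0 := by
    rw [hs1def, hs0def]
    exact sqrt_aux_mono eA eB g heA0 hB
  have hs0e : eA + eB ≤ s0 := by
    rw [hs0def]
    exact sqrt_aux_le (eA+eB) g (by linarith)
  have hs1e : eA - eB ≤ s1 := by
    rw [hs1def]
    exact sqrt_aux_le (eA-eB) g (by linarith)
  -- antitone vectors
  have hantiσA : Antitone ![eA, -eA] := antitone_pair (by linarith)
  have hantiσB : Antitone ![eB, -eB] := antitone_pair (by linarith)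
  have hantiH : Antitone wH := by
    rw [hwHdef]
    exact antitone_four hs01 (by linarith) (by linarith)
  -- unfold Cap
  simp only [Cap]
  rw [dif_pos hptA, dif_pos hsA, dif_pos hptB, dif_pos hsB, dif_pos hherm, dif_pos hH4]
  rw [eigsDesc_eq_dsort hptA _ hdetA, eigsDesc_eq_dsort hsA _ hdetσA,
    eigsDesc_eq_dsort hptB _ hdetB, eigsDesc_eq_dsort hsB _ hdetσB,
    eigsDesc_eq_dsort hherm _ hdetρ, eigsDesc_eq_dsort hH4 _ hdetH]
  erw [dsort_pair (aR+bR) (cR+dR), dsort_pair (aR+cR) (bR+dR),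
    dsort_eq_self_of_antitone hantiσA, dsort_eq_self_of_antitone hantiσB,
    dsort_eq_self_of_antitone hantiH]
  erw [cap_two, cap_two, cap_four]
  -- evaluate vectors
  have fA0 : (![max (aR+bR) (cR+dR), min (aR+bR) (cR+dR)] : Fin 2 → ℝ) 0
      = max (aR+bR) (cR+dR) := rfl
  have fB0 : (![max (aR+cR) (bR+dR), min (aR+cR) (bR+dR)] : Fin 2 → ℝ) 0
      = max (aR+cR) (bR+dR) := rfl
  have hwH0 : wH 0 = s0 := by rw [hwHdef]; rfl
  have hwH1 : wH 1 = s1 := by rw [hwHdef]; rfl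
  have hwH2 : wH 2 = -s1 := by rw [hwHdef]; rfl
  have hwH3 : wH 3 = -s0 := by rw [hwHdef]; rfl
  simp only [hwH0, hwH1, hwH2, hwH3, Matrix.cons_val_zero, Matrix.cons_val_one,
    Matrix.head_cons]
  -- order facts about dsort wρ
  have hlam : ∀ j, wρ j = dsort wρ ((Fin.revPerm.trans (Tuple.sort wρ)).symm j) := by
    intro j
    show wρ j = wρ ((Fin.revPerm.trans (Tuple.sort wρ)) ((Fin.revPerm.trans (Tuple.sort wρ)).symm j))
    rw [Equiv.apply_symm_apply]
  have hanti := dsort_antitone wρ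
  have htop : ∀ j, wρ j ≤ dsort wρ 0 := fun j => by
    rw [hlam j]; exact hanti (Fin.zero_le _)
  have hbot : ∀ j, dsort wρ 3 ≤ wρ j := fun j => by
    rw [hlam j]; exact hanti (Fin.le_last _)
  have htop2 : wρ 0 + wρ 2 ≤ dsort wρ 0 + dsort wρ 1 := by
    rw [hlam 0, hlam 2]
    exact antitone_top2 hanti ((Equiv.injective _).ne_iff.mpr (by decide))
  have hbot2 : dsort wρ 2 + dsort wρ 3 ≤ wρ 1 + wρ 3 := by
    rw [hlam 1, hlam 3]
    exact antitone_bot2 hanti ((Equiv.injective _).ne_iff.mpr (by decide))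
  have e0 : wρ 0 = (aR+dR)/2 + sZ := by rw [hwρdef]; rfl
  have e1 : wρ 1 = (aR+dR)/2 - sZ := by rw [hwρdef]; rfl
  have e2 : wρ 2 = (bR+cR)/2 + sY := by rw [hwρdef]; rfl
  have e3 : wρ 3 = (bR+cR)/2 - sY := by rw [hwρdef]; rfl
  -- bounds on |u|, |v|
  have hDu : |u| ≤ 2*sZ := by
    have h1 : Real.sqrt ((u/2)^2) ≤ sZ := by
      rw [hsZdef]; exact Real.sqrt_le_sqrt (by linarith)
    rw [Real.sqrt_sq_eq_abs, abs_div] at h1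
    have : |(2:ℝ)| = 2 := by norm_num
    rw [this] at h1
    linarith
  have hEv : |v| ≤ 2*sY := by
    have h1 : Real.sqrt ((v/2)^2) ≤ sY := by
      rw [hsYdef]; exact Real.sqrt_le_sqrt (by linarith)
    rw [Real.sqrt_sq_eq_abs, abs_div] at h1
    have : |(2:ℝ)| = 2 := by norm_num
    rw [this] at h1
    linarith
  have hG0D : 2*sZ ≤ dsort wρ 0 - dsort wρ 3 := by
    have := htop 0
    have := hbot 1
    rw [e0] at *
    rw [e1] at *
    linarith [htop 0, hbot 1]
  have hG0E : 2*sY ≤ dsort wρ 0 - dsort wρ 3 := by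
    linarith [htop 2, hbot 3, e2, e3, htop 2]
  have hGsum : 2*sZ + 2*sY ≤ (dsort wρ 0 - dsort wρ 3) + (dsort wρ 1 - dsort wρ 2) := by
    have h1 := htop2
    have h2 := hbot2
    rw [e0, e2] at h1
    rw [e1, e3] at h2
    linarith
  -- abs rewritings
  have m1 : max (aR+bR) (cR+dR) - min (aR+bR) (cR+dR) = |u+v| := by
    rw [max_sub_min_eq_abs, abs_sub_comm]
    congr 1
    rw [hudef, hvdef]; ring
  have m2 : max (aR+cR) (bR+dR) - min (aR+cR) (bR+dR) = |u-v| := by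
    rw [max_sub_min_eq_abs, abs_sub_comm]
    congr 1
    rw [hudef, hvdef]; ring
  have main := final_arith eA eB u v (2*sZ) (2*sY)
    (dsort wρ 0 - dsort wρ 3) (dsort wρ 1 - dsort wρ 2) s0 s1
    hAB hB hDu hEv hG0D hG0E hGsum hs0e hs1e hs01 hs1n
  have m1n : min (aR+bR) (cR+dR) - max (aR+bR) (cR+dR) = -|u+v| := by rw [← m1]; ring
  have m2n : min (aR+cR) (bR+dR) - max (aR+cR) (bR+dR) = -|u-v| := by rw [← m2]; ring
  rw [m1, m2, m1n, m2n]
  change eA * |u + v| + -eA * -|u + v| + (eB * |u - v| + -eB * -|u - v|) ≤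
    s0 * (dsort wρ 0 - dsort wρ 3) + s1 * (dsort wρ 1 - dsort wρ 2) + -s1 * (dsort wρ 2 - dsort wρ 1) +
      -s0 * (dsort wρ 3 - dsort wρ 0)
  linarith [main]
end

section
/- For a diagonal two-qubit density matrix whose diagonal entries satisfy ρ₁₁ ≥ ρ₂₂ ≥ ρ₃₃ ≥ ρ₄₄, and interaction-free Hamiltonian (γ = 0), equality holds in the monogamy relation: C(ρ_A; H_A) + C(ρ_B; H_B) = C(ρ; H_AB). -/
open Matrix Finset
open scoped Kronecker

open scoped ComplexOrder

-- ## Auxiliary lemmas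

section Aux

open Polynomial

theorem dsort_eq_of_perm' {d : ℕ} {x y : Fin d → ℝ}
    (h : (↑(List.ofFn x) : Multiset ℝ) = ↑(List.ofFn y)) : dsort x = dsort y := by
  have hx : List.Perm (List.ofFn (x ∘ Tuple.sort x)) (List.ofFn x) :=
    Equiv.Perm.ofFn_comp_perm _ x
  have hy : List.Perm (List.ofFn (y ∘ Tuple.sort y)) (List.ofFn y) :=
    Equiv.Perm.ofFn_comp_perm _ y
  have hxy : List.Perm (List.ofFn x) (List.ofFn y) := Multiset.coe_eq_coe.mp h
  have heq : List.ofFn (x ∘ Tuple.sort x) = List.ofFn (y ∘ Tuple.sort y) :=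
    List.Perm.eq_of_sortedLE
      (Tuple.monotone_sort x).sortedLE_ofFn (Tuple.monotone_sort y).sortedLE_ofFn
      (hx.trans (hxy.trans hy.symm))
  have hfn : x ∘ Tuple.sort x = y ∘ Tuple.sort y := List.ofFn_injective heq
  funext i
  exact congrFun hfn i.rev

theorem dsort_of_antitone' {d : ℕ} {w : Fin d → ℝ} (hw : Antitone w) : dsort w = w := by
  have hmono : Monotone (w ∘ ⇑(Fin.revPerm : Equiv.Perm (Fin d))) := by
    intro a b hab
    exact hw (by simpa using Fin.rev_le_rev.mpr hab)
  have heq : List.ofFn (w ∘ Tuple.sort w) = List.ofFn (w ∘ ⇑(Fin.revPerm : Equiv.Perm (Fin d))) :=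
    List.Perm.eq_of_sortedLE
      (Tuple.monotone_sort w).sortedLE_ofFn hmono.sortedLE_ofFn
      ((Equiv.Perm.ofFn_comp_perm _ w).trans (Equiv.Perm.ofFn_comp_perm _ w).symm)
  have hfn : w ∘ Tuple.sort w = w ∘ ⇑(Fin.revPerm : Equiv.Perm (Fin d)) := List.ofFn_injective heq
  funext i
  have := congrFun hfn i.rev
  simpa [dsort] using this

theorem ofFn_comp_equiv_symm' {n : Type*} [Fintype n] [DecidableEq n]
    (f : n → ℝ) (e : n ≃ Fin (Fintype.card n)) :
    (↑(List.ofFn (f ∘ e.symm)) : Multiset ℝ) = Multiset.map f Finset.univ.val := by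
  rw [← Fin.univ_val_map, ← Multiset.map_map f e.symm]
  congr 1
  have h := congrArg Finset.val (Finset.map_univ_equiv e.symm)
  rw [Finset.map_val] at h
  simpa using h

theorem herm_diag_real' {n : Type*} [Fintype n] [DecidableEq n] (v : n → ℝ) :
    (Matrix.diagonal (fun i => ((v i : ℝ) : ℂ))).IsHermitian := by
  refine Matrix.isHermitian_diagonal_of_self_adjoint _ ?_
  funext i
  simp [Pi.star_apply, Complex.conj_ofReal]

theorem charpoly_conj_aux' {n R : Type*} [Fintype n] [DecidableEq n] [CommRing R]
    (U V B : Matrix n n R) (hUV : U * V = 1) :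
    (U * B * V).charpoly = B.charpoly := by
  have hscalar : (scalar n (X : R[X])) = (X : R[X]) • (1 : Matrix n n R[X]) := by
    ext i j
    simp [Matrix.scalar_apply, Matrix.smul_apply, Matrix.one_apply, Matrix.diagonal_apply]
  have key : charmatrix (U * B * V) = U.map C * charmatrix B * V.map C := by
    unfold charmatrix
    rw [mul_sub, sub_mul]
    congr 1
    · rw [hscalar, mul_smul_comm, smul_mul_assoc, mul_one, ← Matrix.map_mul, hUV]; simp
    · simp only [RingHom.mapMatrix_apply]
      rw [← Matrix.map_mul, ← Matrix.map_mul]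
  rw [Matrix.charpoly, key, det_mul, det_mul, mul_comm (det (U.map C)), mul_assoc,
    ← det_mul, ← Matrix.map_mul, hUV]
  simp [Matrix.charpoly]

theorem charpoly_diag_aux' {n R : Type*} [Fintype n] [DecidableEq n] [CommRing R] (d : n → R) :
    (Matrix.diagonal d).charpoly = ∏ i, (X - C (d i)) := by
  rw [Matrix.charpoly]
  have : charmatrix (Matrix.diagonal d) = Matrix.diagonal (fun i => X - C (d i)) := by
    ext i j
    by_cases h : i = j
    · subst h; simp [charmatrix_apply_eq]
    · simp [charmatrix_apply_ne _ _ _ h, Matrix.diagonal_apply_ne _ h]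
  rw [this, Matrix.det_diagonal]

theorem eig_multiset_aux' {n : Type*} [Fintype n] [DecidableEq n] (v : n → ℝ)
    (hA : (Matrix.diagonal (fun i => ((v i : ℝ) : ℂ))).IsHermitian) :
    Multiset.map hA.eigenvalues Finset.univ.val = Multiset.map v Finset.univ.val := by
  have hsp := hA.spectral_theorem
  set U : Matrix n n ℂ := (hA.eigenvectorUnitary : Matrix n n ℂ) with hU
  have hUV : U * star U = 1 := congrArg Subtype.val (Unitary.mul_star_self hA.eigenvectorUnitary)
  have hcp : (Matrix.diagonal (fun i => ((v i : ℝ) : ℂ))).charpoly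
      = (Matrix.diagonal (RCLike.ofReal ∘ hA.eigenvalues) : Matrix n n ℂ).charpoly := by
    conv_lhs => rw [hsp]
    exact charpoly_conj_aux' U (star U) _ hUV
  rw [charpoly_diag_aux', charpoly_diag_aux'] at hcp
  have h1 : ∀ (z : n → ℂ), (∏ i, (X - C (z i))) =
      ((Multiset.map z Finset.univ.val).map (fun a => X - C a)).prod := by
    intro z
    rw [Multiset.map_map]
    rfl
  rw [h1, h1] at hcp
  have hroots := congrArg Polynomial.roots hcp
  rw [roots_multiset_prod_X_sub_C, roots_multiset_prod_X_sub_C] at hroots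
  have h2 : ∀ (w : n → ℝ), Multiset.map (fun i => ((w i : ℝ) : ℂ)) Finset.univ.val
      = Multiset.map Complex.ofReal (Multiset.map w Finset.univ.val) := by
    intro w; rw [Multiset.map_map]; rfl
  apply Multiset.map_injective (f := Complex.ofReal) Complex.ofReal_injective
  rw [← h2, ← h2, hroots]
  rfl

theorem eigsDesc_diag' {n : Type*} [Fintype n] [DecidableEq n] {v : n → ℝ}
    (hA : (Matrix.diagonal (fun i => ((v i : ℝ) : ℂ))).IsHermitian)
    (w : Fin (Fintype.card n) → ℝ) (hw : Antitone w)
    (hmul : (↑(List.ofFn w) : Multiset ℝ) = Multiset.map v Finset.univ.val) :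
    eigsDesc hA = w := by
  unfold eigsDesc
  have hperm : (↑(List.ofFn (hA.eigenvalues ∘ (Fintype.equivFin n).symm)) : Multiset ℝ)
      = ↑(List.ofFn w) := by
    rw [ofFn_comp_equiv_symm' hA.eigenvalues (Fintype.equivFin n), eig_multiset_aux' v hA, hmul]
  rw [dsort_eq_of_perm' hperm, dsort_of_antitone' hw]

open scoped Classical in
theorem Cap_diag' {n : Type*} [Fintype n] [DecidableEq n] (v eps : n → ℝ)
    (wv we : Fin (Fintype.card n) → ℝ) (hwv : Antitone wv) (hwe : Antitone we)
    (hmv : (↑(List.ofFn wv) : Multiset ℝ) = Multiset.map v Finset.univ.val)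
    (hme : (↑(List.ofFn we) : Multiset ℝ) = Multiset.map eps Finset.univ.val) :
    Cap (Matrix.diagonal (fun i => ((v i : ℝ) : ℂ)))
      (Matrix.diagonal (fun i => ((eps i : ℝ) : ℂ))) = cap wv we := by
  unfold Cap
  rw [dif_pos (herm_diag_real' v), dif_pos (herm_diag_real' eps),
    eigsDesc_diag' (herm_diag_real' v) wv hwv hmv,
    eigsDesc_diag' (herm_diag_real' eps) we hwe hme]

theorem antitone_two' {a b : ℝ} (h : b ≤ a) : Antitone ![a, b] := by
  intro i j hij
  fin_cases i <;> fin_cases j <;>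
    first
      | exact absurd hij (by decide)
      | (clear hij; simp_all [Fin.mk_zero, Fin.mk_one]; try linarith)

theorem antitone_four' {a b c d : ℝ} (hab : b ≤ a) (hbc : c ≤ b) (hcd : d ≤ c) :
    Antitone ![a, b, c, d] := by
  intro i j hij
  fin_cases i <;> fin_cases j <;>
    first
      | exact absurd hij (by decide)
      | (clear hij; simp_all [Fin.mk_zero, Fin.mk_one, show (⟨2,by omega⟩ : Fin 4) = 2 from rfl, show (⟨3,by omega⟩ : Fin 4) = 3 from rfl]; try linarith)

end Aux

/-- Equality case: for a diagonal two-qubit density matrix with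
`ρ₁₁ ≥ ρ₂₂ ≥ ρ₃₃ ≥ ρ₄₄` and interaction-free Hamiltonian, the monogamy
relation is an equality. -/
theorem capacity_monogamy_equality (p00 p01 p10 p11 eA eB : ℝ)
    (h11 : 0 ≤ p11) (hsum : p00 + p01 + p10 + p11 = 1)
    (hord1 : p00 ≥ p01) (hord2 : p01 ≥ p10) (hord3 : p10 ≥ p11)
    (hAB : eA ≥ eB) (hB : eB ≥ 0) :
    Cap (Matrix.diagonal (fun a : Fin 2 => ((![p00 + p01, p10 + p11] a : ℝ) : ℂ)))
        ((eA : ℂ) • σ3) +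
    Cap (Matrix.diagonal (fun b : Fin 2 => ((![p00 + p10, p01 + p11] b : ℝ) : ℂ)))
        ((eB : ℂ) • σ3) =
    Cap (Matrix.diagonal (fun x : Fin 2 × Fin 2 => ((![![p00, p01], ![p10, p11]] x.1 x.2 : ℝ) : ℂ)))
        (HAB eA eB 0) := by
  have hHA : (eA : ℂ) • σ3 = Matrix.diagonal (fun i : Fin 2 => ((![eA, -eA] i : ℝ) : ℂ)) := by
    ext i j
    fin_cases i <;> fin_cases j <;> simp [σ3, Matrix.diagonal] <;> push_cast <;> ring
  have hHB : (eB : ℂ) • σ3 = Matrix.diagonal (fun i : Fin 2 => ((![eB, -eB] i : ℝ) : ℂ)) := by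
    ext i j
    fin_cases i <;> fin_cases j <;> simp [σ3, Matrix.diagonal] <;> push_cast <;> ring
  have hHAB : HAB eA eB 0 = Matrix.diagonal
      (fun x : Fin 2 × Fin 2 =>
        ((![![eA + eB, eA - eB], ![-(eA - eB), -(eA + eB)]] x.1 x.2 : ℝ) : ℂ)) := by
    ext ⟨i, j⟩ ⟨k, l⟩
    fin_cases i <;> fin_cases j <;> fin_cases k <;> fin_cases l <;>
      simp [HAB, σ1, σ3, Matrix.diagonal, Matrix.kroneckerMap_apply, Matrix.one_apply] <;>
      first
        | rw [if_neg (by decide)]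
        | (push_cast; ring)
  have hmv4 : (↑(List.ofFn ![p00, p01, p10, p11]) : Multiset ℝ)
      = Multiset.map (fun x : Fin 2 × Fin 2 => (![![p00, p01], ![p10, p11]] x.1 x.2 : ℝ))
          Finset.univ.val := by
    rw [show (Finset.univ.val : Multiset (Fin 2 × Fin 2)) = {(0,0),(0,1),(1,0),(1,1)} from by
      decide]
    simp [List.ofFn_succ, Multiset.insert_eq_cons]
    rfl
  have hme4 : (↑(List.ofFn ![eA + eB, eA - eB, -(eA - eB), -(eA + eB)]) : Multiset ℝ)
      = Multiset.map
          (fun x : Fin 2 × Fin 2 => (![![eA + eB, eA - eB], ![-(eA - eB), -(eA + eB)]] x.1 x.2 : ℝ))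
          Finset.univ.val := by
    rw [show (Finset.univ.val : Multiset (Fin 2 × Fin 2)) = {(0,0),(0,1),(1,0),(1,1)} from by
      decide]
    simp [List.ofFn_succ, Multiset.insert_eq_cons]
    rfl
  rw [hHA, hHB, hHAB]
  rw [Cap_diag' _ _ ![p00 + p01, p10 + p11] ![eA, -eA]
        (antitone_two' (by linarith)) (antitone_two' (by linarith))
        (Fin.univ_val_map _).symm (Fin.univ_val_map _).symm,
      Cap_diag' _ _ ![p00 + p10, p01 + p11] ![eB, -eB]
        (antitone_two' (by linarith)) (antitone_two' (by linarith))
        (Fin.univ_val_map _).symm (Fin.univ_val_map _).symm,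
      Cap_diag' _ _ ![p00, p01, p10, p11] ![eA + eB, eA - eB, -(eA - eB), -(eA + eB)]
        (antitone_four' (by linarith) (by linarith) (by linarith))
        (antitone_four' (by linarith) (by linarith) (by linarith))
        hmv4 hme4]
  show cap ![p00 + p01, p10 + p11] ![eA, -eA] + cap ![p00 + p10, p01 + p11] ![eB, -eB]
      = cap ![p00, p01, p10, p11] ![eA + eB, eA - eB, -(eA - eB), -(eA + eB)]
  have r20 : (0 : Fin 2).rev = 1 := rfl
  have r21 : (1 : Fin 2).rev = 0 := rfl
  have r40 : (0 : Fin 4).rev = 3 := rfl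
  have r41 : (1 : Fin 4).rev = 2 := rfl
  have r42 : (2 : Fin 4).rev = 1 := rfl
  have r43 : (3 : Fin 4).rev = 0 := rfl
  simp [cap, Fin.sum_univ_two, Fin.sum_univ_four, r20, r21, r40, r41, r42, r43]
  ring
end
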